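/- Suppose each p_i is additionally positively L-homogeneous for a positive integer L. Let u ∈ ℝ^d with ‖u‖ = 1 and m(u) > 0, and suppose there exist λ_1, …, λ_n ≥ 0 with Σλ_i = 1, λ_i = 0 whenever p_i(u) ≠ m(u), such that v := Σ_{i=1}^n λ_i·∇p_i(u) satisfies v − ⟨v,u⟩·u = 0. Then the rescaled point w := m(u)^{−1/L}·u is a KKT point of the problem min{‖w‖² : m(w) ≥ 1}: namely min_{1≤i≤n} p_i(w) = 1 and there exist α_1, …, α_n ≥ 0 with α_i·(p_i(w) − 1) = 0 for every i and w = Σ_{i=1}^n α_i·∇p_i(w). -/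

import Mathlib

open scoped RealInnerProductSpace
open InnerProductSpace

variable {d L : ℕ}

/-- Scaling of the gradient of a positively homogeneous function. -/
lemma grad_scale {f : EuclideanSpace ℝ (Fin d) → ℝ} (hf : ContDiff ℝ 1 f)
    (hL : 0 < L) {c : ℝ} (hc : 0 < c)
    (hhom : ∀ x, f (c • x) = c ^ L * f x) (x : EuclideanSpace ℝ (Fin d)) :
    gradient f (c • x) = c ^ (L - 1) • gradient f x := by
  have hdiff := hf.differentiable one_ne_zero
  have hsc : HasFDerivAt (fun y : EuclideanSpace ℝ (Fin d) => c • y)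
      (c • ContinuousLinearMap.id ℝ (EuclideanSpace ℝ (Fin d))) x := by
    exact (hasFDerivAt_id x).const_smul c
  have h1 : HasFDerivAt (fun y => f (c • y))
      ((fderiv ℝ f (c • x)).comp (c • ContinuousLinearMap.id ℝ (EuclideanSpace ℝ (Fin d)))) x :=
    (hdiff (c • x)).hasFDerivAt.comp x hsc
  have h2 : HasFDerivAt (fun y => c ^ L * f y) ((c ^ L) • fderiv ℝ f x) x :=
    (hdiff x).hasFDerivAt.const_mul (c ^ L)
  have heq : (fun y => f (c • y)) = fun y => c ^ L * f y := funext hhom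
  rw [heq] at h1
  have hkey := h1.unique h2
  have hclm : fderiv ℝ f (c • x) = c ^ (L - 1) • fderiv ℝ f x := by
    ext y
    have := congrFun (congrArg (fun (T : _ →L[ℝ] ℝ) => (T : EuclideanSpace ℝ (Fin d) → ℝ)) hkey) y
    simp only [ContinuousLinearMap.coe_comp', Function.comp_apply,
      ContinuousLinearMap.coe_smul', Pi.smul_apply, ContinuousLinearMap.coe_id', id_eq,
      smul_eq_mul] at this ⊢
    have hmap : fderiv ℝ f (c • x) (c • y) = c * fderiv ℝ f (c • x) y := by
      rw [map_smul]; simp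
    rw [hmap] at this
    have hL1 : L - 1 + 1 = L := Nat.succ_pred_eq_of_pos hL
    have hcL : c ^ L = c * c ^ (L - 1) := by
      conv_lhs => rw [← hL1, pow_succ]
      ring
    have h3 : c * (fderiv ℝ f (c • x)) y = c * (c ^ (L - 1) * (fderiv ℝ f x) y) := by
      rw [this, hcL]; ring
    exact mul_left_cancel₀ hc.ne' h3
  rw [gradient, gradient, hclm, map_smul]

/-- Euler's identity for positively homogeneous functions. -/
lemma euler_id {f : EuclideanSpace ℝ (Fin d) → ℝ} (hf : ContDiff ℝ 1 f)
    (hL : 0 < L) (hhom : ∀ c : ℝ, 0 < c → ∀ x, f (c • x) = c ^ L * f x)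
    (u : EuclideanSpace ℝ (Fin d)) :
    ⟪gradient f u, u⟫ = (L : ℝ) * f u := by
  have hdiff := hf.differentiable one_ne_zero
  have hline : HasDerivAt (fun t : ℝ => t • u) u 1 := by
    simpa using (hasDerivAt_id (1:ℝ)).smul_const u
  have h1 : HasDerivAt (fun t : ℝ => f (t • u)) (fderiv ℝ f u u) 1 := by
    have := (hdiff ((1:ℝ) • u)).hasFDerivAt.comp_hasDerivAt 1 hline
    rw [one_smul] at this; exact this
  have heq : (fun t : ℝ => f (t • u)) =ᶠ[nhds (1:ℝ)] fun t => t ^ L * f u := by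
    filter_upwards [Ioi_mem_nhds (zero_lt_one)] with t ht
    exact hhom t ht u
  have h1' : HasDerivAt (fun t : ℝ => t ^ L * f u) (fderiv ℝ f u u) 1 :=
    h1.congr_of_eventuallyEq heq.symm
  have h2 : HasDerivAt (fun t : ℝ => t ^ L * f u) ((L : ℝ) * f u) 1 := by
    simpa using (hasDerivAt_pow L (1:ℝ)).mul_const (f u)
  have hval : fderiv ℝ f u u = (L : ℝ) * f u := h1'.unique h2
  have hg : HasGradientAt f (gradient f u) u := (hdiff u).hasGradientAt
  have : fderiv ℝ f u = toDual ℝ _ (gradient f u) := by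
    rw [gradient]; exact ((toDual ℝ _).apply_symm_apply _).symm
  rw [← hval, this, toDual_apply_apply]

/-- A critical direction of the margin on the sphere with positive margin
rescales to a KKT point of the max-margin problem (P). -/
theorem stmt_18 {d n L : ℕ} (hd : 0 < d) (hn : 0 < n) (hL : 0 < L)
    (p : Fin n → EuclideanSpace ℝ (Fin d) → ℝ)
    (hp : ∀ i, ContDiff ℝ 1 (p i))
    (hphom : ∀ i, ∀ c : ℝ, 0 < c → ∀ x, p i (c • x) = c ^ L * p i x)
    (u : EuclideanSpace ℝ (Fin d)) (hu : ‖u‖ = 1)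
    (hm : 0 < ⨅ i, p i u)
    (lam : Fin n → ℝ) (hlam0 : ∀ i, 0 ≤ lam i) (hlam1 : ∑ i, lam i = 1)
    (hlamact : ∀ i, p i u ≠ (⨅ j, p j u) → lam i = 0)
    (hcrit : (∑ i, lam i • gradient (p i) u) -
      ⟪∑ i, lam i • gradient (p i) u, u⟫ • u = 0)
    (w : EuclideanSpace ℝ (Fin d))
    (hw : w = ((⨅ j, p j u) ^ (-(1 : ℝ) / (L : ℝ))) • u) :
    (⨅ i, p i w) = 1 ∧
      ∃ α : Fin n → ℝ, (∀ i, 0 ≤ α i) ∧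
        (∀ i, α i * (p i w - 1) = 0) ∧
        w = ∑ i, α i • gradient (p i) w := by
  haveI : Nonempty (Fin n) := Fin.pos_iff_nonempty.mp hn
  set m : ℝ := ⨅ j, p j u with hmdef
  set c : ℝ := m ^ (-(1:ℝ) / (L : ℝ)) with hcdef
  have hcpos : 0 < c := Real.rpow_pos_of_pos hm _
  have hLne : (L : ℝ) ≠ 0 := Nat.cast_ne_zero.mpr hL.ne'
  -- c ^ L = m⁻¹
  have hcL : c ^ L = m⁻¹ := by
    rw [hcdef, ← Real.rpow_natCast (m ^ (-(1:ℝ)/(L:ℝ))) L, ← Real.rpow_mul hm.le]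
    rw [show (-(1:ℝ)/(L:ℝ)) * (L:ℕ) = -1 by field_simp]
    exact Real.rpow_neg_one m
  have hmle : ∀ i, m ≤ p i u := fun i =>
    ciInf_le (Set.Finite.bddBelow (Set.finite_range _)) i
  obtain ⟨i0, hi0⟩ := exists_eq_ciInf_of_finite (f := fun i => p i u)
  -- value at w
  have hpw : ∀ i, p i w = m⁻¹ * p i u := fun i => by
    rw [hw, hphom i c hcpos u, hcL]
  -- margin at w is 1
  have hmargin : (⨅ i, p i w) = 1 := by
    apply le_antisymm
    · calc (⨅ i, p i w) ≤ p i0 w :=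
            ciInf_le (Set.Finite.bddBelow (Set.finite_range _)) i0
        _ = 1 := by rw [hpw, hi0]; exact inv_mul_cancel₀ hm.ne'
    · apply le_ciInf
      intro i
      rw [hpw]
      calc (1:ℝ) = m⁻¹ * m := (inv_mul_cancel₀ hm.ne').symm
        _ ≤ m⁻¹ * p i u := by
            exact mul_le_mul_of_nonneg_left (hmle i) (inv_nonneg.mpr hm.le)
  refine ⟨hmargin, ?_⟩
  -- Euler identities
  have heuler : ∀ i, ⟪gradient (p i) u, u⟫ = (L : ℝ) * p i u := fun i =>
    euler_id (hp i) hL (hphom i) u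
  set v : EuclideanSpace ℝ (Fin d) := ∑ i, lam i • gradient (p i) u with hvdef
  have hlm : ∀ i, lam i * p i u = lam i * m := by
    intro i
    by_cases h : p i u = m
    · rw [h]
    · rw [hlamact i h]; ring
  have hvin : ⟪v, u⟫ = (L : ℝ) * m := by
    rw [hvdef, sum_inner]
    have : ∀ i ∈ Finset.univ, ⟪lam i • gradient (p i) u, u⟫ = (L:ℝ) * (lam i * m) := by
      intro i _
      rw [real_inner_smul_left, heuler i, ← hlm i]; ring
    rw [Finset.sum_congr rfl this, ← Finset.mul_sum, ← Finset.sum_mul, hlam1]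
    ring
  have hveq : v = ((L : ℝ) * m) • u := by
    have h := sub_eq_zero.mp hcrit
    rw [h, hvin]
  -- gradient scaling
  have hgw : ∀ i, gradient (p i) w = c ^ (L - 1) • gradient (p i) u := by
    intro i
    rw [hw]
    exact grad_scale (hp i) hL hcpos (fun x => hphom i c hcpos x) u
  set t : ℝ := c / ((L : ℝ) * m * c ^ (L - 1)) with htdef
  have hden : 0 < (L : ℝ) * m * c ^ (L - 1) :=
    mul_pos (mul_pos (by exact_mod_cast hL) hm) (pow_pos hcpos _)
  have htpos : 0 < t := div_pos hcpos hden
  refine ⟨fun i => lam i * t, fun i => mul_nonneg (hlam0 i) htpos.le, ?_, ?_⟩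
  · intro i
    show lam i * t * (p i w - 1) = 0
    by_cases h : p i u = m
    · have : p i w = 1 := by rw [hpw, h]; exact inv_mul_cancel₀ hm.ne'
      rw [this]; ring
    · rw [hlamact i h]; ring
  · have hkey : t * c ^ (L - 1) * ((L : ℝ) * m) = c := by
      rw [htdef]; field_simp
    calc w = c • u := hw
      _ = (t * c ^ (L - 1) * ((L:ℝ) * m)) • u := by rw [hkey]
      _ = (t * c ^ (L - 1)) • (((L:ℝ) * m) • u) := by rw [← smul_smul]
      _ = (t * c ^ (L - 1)) • v := by rw [hveq]
      _ = ∑ i, (lam i * t) • gradient (p i) w := by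
          rw [hvdef, Finset.smul_sum]
          apply Finset.sum_congr rfl
          intro i _
          rw [hgw i, smul_smul, smul_smul]
          ring_nf
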